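/- Let X, Y be real Banach spaces, U ⊆ X an open convex set, f : U → Y continuous, and Jf a pseudo-Jacobian mapping for f on U satisfying the chain rule condition. Suppose that every operator in the convex hull co Jf(U) (where Jf(U) = ⋃_{x ∈ U} Jf(x)) is an isomorphism from X onto Y, and that α := inf{//T// : T ∈ co Jf(U)} > 0, where //T// denotes the co-norm of T. Then V := f(U) is open in Y, f is a homeomorphism from U onto V, and the inverse map f⁻¹ is (1/α)-Lipschitz on V. -/

import Mathlib

open Filter Topology Metric Set Bornology

noncomputable section

/-- Upper right-hand Dini directional derivative of `φ` at `x` in direction `v`. -/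
def diniUpper {X : Type*} [NormedAddCommGroup X] [NormedSpace ℝ X]
    (φ : X → ℝ) (x v : X) : ℝ :=
  Filter.limsup (fun t : ℝ => (φ (x + t • v) - φ x) / t) (𝓝[>] (0 : ℝ))

/-- `J` is a pseudo-Jacobian of `f` at `x`: `J` is a nonempty set of bounded linear
operators such that for every continuous linear functional `p` on `Y` and every
direction `v`, the upper Dini derivative of `p ∘ f` at `x` in direction `v` is bounded
by `sup {p (T v) : T ∈ J}`. -/
def IsPseudoJacobianAt {X Y : Type*} [NormedAddCommGroup X] [NormedSpace ℝ X]
    [NormedAddCommGroup Y] [NormedSpace ℝ Y]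
    (f : X → Y) (J : Set (X →L[ℝ] Y)) (x : X) : Prop :=
  J.Nonempty ∧ ∀ (p : Y →L[ℝ] ℝ) (v : X),
    diniUpper (fun z => p (f z)) x v ≤ sSup ((fun T : X →L[ℝ] Y => p (T v)) '' J)


/-- Clarke generalized directional derivative of `φ` at `y` in direction `w`:
`limsup_{z → y, t → 0⁺} (φ (z + t w) − φ z)/t`. -/
def clarkeDirDeriv {Y : Type*} [NormedAddCommGroup Y] [NormedSpace ℝ Y]
    (φ : Y → ℝ) (y w : Y) : ℝ :=
  Filter.limsup (fun q : Y × ℝ => (φ (q.1 + q.2 • w) - φ q.1) / q.2)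
    ((𝓝 y) ×ˢ (𝓝[>] (0 : ℝ)))

/-- Clarke subdifferential of `φ` at `y`. -/
def clarkeSubdiff {Y : Type*} [NormedAddCommGroup Y] [NormedSpace ℝ Y]
    (φ : Y → ℝ) (y : Y) : Set (Y →L[ℝ] ℝ) :=
  {p | ∀ w : Y, p w ≤ clarkeDirDeriv φ y w}

/-- The set `A_{x,y}(f) = ∂‖·‖(f x − y) ∘ co (Jf x) ⊆ X*`. -/
def pjComp {X Y : Type*} [NormedAddCommGroup X] [NormedSpace ℝ X]
    [NormedAddCommGroup Y] [NormedSpace ℝ Y]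
    (f : X → Y) (Jf : X → Set (X →L[ℝ] Y)) (x : X) (y : Y) : Set (X →L[ℝ] ℝ) :=
  {S | ∃ p ∈ clarkeSubdiff (fun w : Y => ‖w‖) (f x - y),
       ∃ T ∈ convexHull ℝ (Jf x), S = p.comp T}

/-- The pseudo-Jacobian mapping `Jf` satisfies the chain rule condition on `U`:
for every `x ∈ U` and every `y ≠ f x`, the set `A_{x,y}(f)` is weak-star closed,
convex, and is a pseudo-Jacobian at `x` of the function `z ↦ ‖f z − y‖`. -/
def ChainRuleCond {X Y : Type*} [NormedAddCommGroup X] [NormedSpace ℝ X]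
    [NormedAddCommGroup Y] [NormedSpace ℝ Y]
    (f : X → Y) (Jf : X → Set (X →L[ℝ] Y)) (U : Set X) : Prop :=
  ∀ x ∈ U, ∀ y : Y, y ≠ f x →
    IsClosed ((StrongDual.toWeakDual : (X →L[ℝ] ℝ) → WeakDual ℝ X) ''
        pjComp f Jf x y) ∧
    Convex ℝ (pjComp f Jf x y) ∧
    IsPseudoJacobianAt (fun z : X => ‖f z - y‖) (pjComp f Jf x y) x

/-- The co-norm of a bounded linear operator: `//T// = inf {‖T x‖ : ‖x‖ = 1}`. -/
def conorm {X Y : Type*} [NormedAddCommGroup X] [NormedSpace ℝ X]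
    [NormedAddCommGroup Y] [NormedSpace ℝ Y] (T : X →L[ℝ] Y) : ℝ :=
  sInf {c : ℝ | ∃ x : X, ‖x‖ = 1 ∧ c = ‖T x‖}

/-- `T` is an isomorphism of Banach spaces. -/
def IsBanachIso {X Y : Type*} [NormedAddCommGroup X] [NormedSpace ℝ X]
    [NormedAddCommGroup Y] [NormedSpace ℝ Y] (T : X →L[ℝ] Y) : Prop :=
  ∃ e : X ≃L[ℝ] Y, (e : X →L[ℝ] Y) = T


set_option maxHeartbeats 1000000

/-! ### Auxiliary lemmas for the proof -/

section AuxLimsup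

/-- If a real-valued function is not eventually bounded above along a filter, its
`limsup` is the junk value `0`. -/
lemma real_limsup_of_not_bddAbove {α : Type*} {l : Filter α} {u : α → ℝ}
    (h : ¬ l.IsBoundedUnder (· ≤ ·) u) : Filter.limsup u l = 0 := by
  rw [Filter.limsup_eq]
  have he : {a : ℝ | ∀ᶠ n in l, u n ≤ a} = ∅ := by
    rw [Set.eq_empty_iff_forall_notMem]
    intro a ha
    exact h ⟨a, Filter.eventually_map.2 ha⟩
  rw [he, Real.sInf_empty]

/-- A nonpositive eventual lower bound is a lower bound for a real `limsup`. -/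
lemma le_real_limsup {α : Type*} {l : Filter α} [l.NeBot] {u : α → ℝ} {c : ℝ}
    (hc : c ≤ 0) (h : ∀ᶠ x in l, c ≤ u x) : c ≤ Filter.limsup u l := by
  by_cases hb : l.IsBoundedUnder (· ≤ ·) u
  · exact Filter.le_limsup_of_frequently_le h.frequently hb
  · rw [real_limsup_of_not_bddAbove hb]; exact hc

/-- An eventual upper bound bounds a real `limsup` provided the function is also
eventually bounded below. -/
lemma real_limsup_le {α : Type*} {l : Filter α} [l.NeBot] {u : α → ℝ} {c d : ℝ}
    (hlow : ∀ᶠ x in l, d ≤ u x) (hub : ∀ᶠ x in l, u x ≤ c) : Filter.limsup u l ≤ c := by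
  have hbdd : l.IsBoundedUnder (· ≥ ·) u := ⟨d, Filter.eventually_map.2 hlow⟩
  exact Filter.limsup_le_of_le hbdd.isCoboundedUnder_le hub

/-- Mean value inequality via right Dini upper derivatives (as `Real` limsups). -/
lemma mvt_diniUpper {g : ℝ → ℝ} {c : ℝ} (hc : c < 0)
    (hg : ContinuousOn g (Set.Icc 0 1))
    (hd : ∀ s ∈ Set.Ico (0:ℝ) 1,
      Filter.limsup (fun t : ℝ => (g (s + t) - g s) / t) (𝓝[>] (0:ℝ)) ≤ c) :
    g 1 ≤ g 0 + c := by
  have key := image_le_of_liminf_slope_right_le_deriv_boundary (f := g) (a := 0) (b := 1)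
    hg (B := fun x => g 0 + c * x) (B' := fun _ => c) (by simp) (by fun_prop)
    (fun x _ => by simpa using ((hasDerivWithinAt_id x (Set.Ici x)).const_mul c).const_add (g 0))
    ?_ (x := 1) (by norm_num)
  · simpa using key
  · intro x hx r hr
    have hlt : Filter.limsup (fun t : ℝ => (g (x + t) - g x) / t) (𝓝[>] (0:ℝ)) < r :=
      lt_of_le_of_lt (hd x hx) hr
    have hbdd : (𝓝[>] (0:ℝ)).IsBoundedUnder (· ≤ ·) (fun t : ℝ => (g (x + t) - g x) / t) := by
      by_contra hb
      have h0 : (0:ℝ) ≤ c := by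
        have := hd x hx
        rwa [real_limsup_of_not_bddAbove hb] at this
      linarith
    have hev : ∀ᶠ t in 𝓝[>] (0:ℝ), (g (x + t) - g x) / t < r :=
      Filter.eventually_lt_of_limsup_lt hlt hbdd
    have hmap : Filter.Tendsto (fun t : ℝ => x + t) (𝓝[>] (0:ℝ)) (𝓝[>] x) := by
      apply tendsto_nhdsWithin_of_tendsto_nhds_of_eventually_within
      · have h1 : Filter.Tendsto (fun t : ℝ => x + t) (𝓝 0) (𝓝 (x + 0)) :=
          (continuous_const.add continuous_id).tendsto (0:ℝ)
        rw [add_zero] at h1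
        exact h1.mono_left nhdsWithin_le_nhds
      · filter_upwards [self_mem_nhdsWithin] with t ht
        exact Set.mem_Ioi.2 (by simpa using (lt_add_iff_pos_right x).2 ht)
    have hev' : ∀ᶠ t in 𝓝[>] (0:ℝ), slope g x (x + t) < r := by
      filter_upwards [hev, self_mem_nhdsWithin] with t ht ht'
      have hxx : x + t - x = t := by ring
      rw [slope_def_field, hxx]
      exact ht
    exact hmap.frequently hev'.frequently

end AuxLimsup

section AuxNorm

/-- The co-norm lower bound gives a pointwise expansion bound. -/
lemma conorm_bound {X Y : Type*} [NormedAddCommGroup X] [NormedSpace ℝ X]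
    [NormedAddCommGroup Y] [NormedSpace ℝ Y] {T : X →L[ℝ] Y} {a : ℝ}
    (h : a ≤ conorm T) (x : X) : a * ‖x‖ ≤ ‖T x‖ := by
  rcases eq_or_ne x 0 with rfl | hx
  · simp
  · have hxn : (0:ℝ) < ‖x‖ := norm_pos_iff.2 hx
    have hun : ‖(‖x‖⁻¹ • x : X)‖ = 1 := by
      rw [norm_smul, norm_inv, norm_norm, inv_mul_cancel₀ hxn.ne']
    have hmem : ‖T (‖x‖⁻¹ • x)‖ ∈ {c : ℝ | ∃ z : X, ‖z‖ = 1 ∧ c = ‖T z‖} :=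
      ⟨‖x‖⁻¹ • x, hun, rfl⟩
    have hbdd : BddBelow {c : ℝ | ∃ z : X, ‖z‖ = 1 ∧ c = ‖T z‖} :=
      ⟨0, by rintro c ⟨z, -, rfl⟩; exact norm_nonneg _⟩
    have h1 : a ≤ ‖T (‖x‖⁻¹ • x)‖ := le_trans h (csInf_le hbdd hmem)
    have h2 : ‖T (‖x‖⁻¹ • x)‖ = ‖x‖⁻¹ * ‖T x‖ := by
      rw [map_smul, norm_smul, norm_inv, norm_norm]
    rw [h2] at h1
    have h3 := mul_le_mul_of_nonneg_right h1 hxn.le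
    calc a * ‖x‖ ≤ (‖x‖⁻¹ * ‖T x‖) * ‖x‖ := h3
    _ = ‖T x‖ := by field_simp

/-- Almost norming vectors exist. -/
lemma exists_almost_norming {Y : Type*} [NormedAddCommGroup Y] [NormedSpace ℝ Y]
    (q : Y →L[ℝ] ℝ) {ε : ℝ} (hε : 0 < ε) : ∃ b : Y, ‖b‖ ≤ 1 ∧ ‖q‖ - ε < q b := by
  by_contra h
  push_neg at h
  have habs : ∀ b : Y, ‖b‖ ≤ 1 → |q b| ≤ ‖q‖ - ε := by
    intro b hb
    refine abs_le.2 ⟨?_, h b hb⟩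
    have h2 := h (-b) (by simpa using hb)
    rw [map_neg] at h2
    linarith
  have hC : (0:ℝ) ≤ ‖q‖ - ε := by simpa using habs 0 (by simp)
  have hle : ‖q‖ ≤ ‖q‖ - ε := by
    refine q.opNorm_le_bound' hC ?_
    intro x hx
    have hxn : (0:ℝ) < ‖x‖ := lt_of_le_of_ne (norm_nonneg x) (Ne.symm hx)
    have h1 := habs (‖x‖⁻¹ • x) (by
      rw [norm_smul, norm_inv, norm_norm]
      exact le_of_eq (inv_mul_cancel₀ hxn.ne'))
    rw [map_smul, smul_eq_mul, abs_mul, abs_of_pos (inv_pos.2 hxn)] at h1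
    have h4 := mul_le_mul_of_nonneg_left h1 hxn.le
    calc ‖q x‖ = |q x| := rfl
    _ = ‖x‖ * (‖x‖⁻¹ * |q x|) := by field_simp
    _ ≤ ‖x‖ * (‖q‖ - ε) := h4
    _ = (‖q‖ - ε) * ‖x‖ := by ring
  linarith

/-- Norm of scalar multiples of continuous linear maps. -/
lemma clm_norm_smul {E F : Type*} [NormedAddCommGroup E] [NormedSpace ℝ E]
    [NormedAddCommGroup F] [NormedSpace ℝ F] (c : ℝ) (q : E →L[ℝ] F) :
    ‖c • q‖ = |c| * ‖q‖ := by
  rw [norm_smul (α := ℝ) (β := E →L[ℝ] F), Real.norm_eq_abs]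

open Pointwise in
/-- Quantitative separation of a convex set at positive distance from the origin. -/
lemma separation_from_origin {Y : Type*} [NormedAddCommGroup Y] [NormedSpace ℝ Y]
    {K : Set Y} (hK : Convex ℝ K) (hKne : K.Nonempty) {β : ℝ} (hβ : 0 < β)
    (hdist : ∀ k ∈ K, β ≤ ‖k‖) {γ : ℝ} (hγ : 0 ≤ γ) (hγβ : γ < β) :
    ∃ p : Y →L[ℝ] ℝ, ‖p‖ ≤ 1 ∧ ∀ k ∈ K, γ ≤ p k := by
  have hOopen : IsOpen (K + Metric.ball (0:Y) β) := (Metric.isOpen_ball).add_left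
  have hOconv : Convex ℝ (K + Metric.ball (0:Y) β) := hK.add (convex_ball 0 β)
  have h0O : (0:Y) ∉ K + Metric.ball (0:Y) β := by
    rintro ⟨k, hk, b, hb, h0⟩
    have hb' : ‖b‖ < β := mem_ball_zero_iff.1 hb
    have hkb : k = -b := by
      have : k + b = 0 := h0
      linear_combination (norm := abel) this
    have hβk := hdist k hk
    rw [hkb, norm_neg] at hβk
    linarith
  obtain ⟨q, hq⟩ := geometric_hahn_banach_open_point hOconv hOopen h0O
  have hq0 : ∀ a ∈ K + Metric.ball (0:Y) β, q a < 0 := by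
    intro a ha
    have := hq a ha
    rwa [map_zero] at this
  have hKO : ∀ k ∈ K, k ∈ K + Metric.ball (0:Y) β := fun k hk =>
    ⟨k, hk, 0, by simpa using hβ, by simp⟩
  obtain ⟨k₀, hk₀⟩ := hKne
  have hqne : q ≠ 0 := by
    intro h
    have := hq0 k₀ (hKO _ hk₀)
    rw [h] at this
    simp at this
  have hqnorm : 0 < ‖q‖ := by
    have hne : ‖q‖ ≠ 0 := fun h => hqne (by rwa [ContinuousLinearMap.opNorm_zero_iff] at h)
    exact lt_of_le_of_ne (norm_nonneg q) (Ne.symm hne)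
  have hkey : ∀ k ∈ K, q k ≤ -(γ * ‖q‖) := by
    intro k hk
    rcases eq_or_lt_of_le hγ with rfl | hγpos
    · simpa using (hq0 k (hKO k hk)).le
    · refine le_of_forall_pos_le_add ?_
      intro ε hε
      obtain ⟨b₁, hb₁, hqb₁⟩ := exists_almost_norming q (div_pos hε hγpos)
      have hbmem : γ • b₁ ∈ Metric.ball (0:Y) β := by
        rw [mem_ball_zero_iff, norm_smul, Real.norm_eq_abs, abs_of_pos hγpos]
        nlinarith
      have hlt := hq0 _ ⟨k, hk, γ • b₁, hbmem, rfl⟩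
      rw [map_add, map_smul, smul_eq_mul] at hlt
      have hgε : γ * (ε / γ) = ε := by field_simp
      nlinarith [mul_lt_mul_of_pos_left hqb₁ hγpos]
  have hnq : ‖(-(‖q‖⁻¹)) • q‖ = 1 := by
    rw [clm_norm_smul, abs_neg, abs_of_pos (inv_pos.2 hqnorm)]
    exact inv_mul_cancel₀ hqnorm.ne'
  refine ⟨(-(‖q‖⁻¹)) • q, le_of_eq hnq, ?_⟩
  intro k hk
  have h1 := hkey k hk
  have happ : ((-(‖q‖⁻¹)) • q) k = -(‖q‖⁻¹) * q k := by
    rw [ContinuousLinearMap.smul_apply, smul_eq_mul]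
  rw [happ]
  have h2 : ‖q‖⁻¹ * ‖q‖ = 1 := inv_mul_cancel₀ hqnorm.ne'
  nlinarith [inv_pos.2 hqnorm]

end AuxNorm

section AuxClarke

variable {Y : Type*} [NormedAddCommGroup Y] [NormedSpace ℝ Y]

lemma clarkeDirDeriv_norm_le (y z : Y) : clarkeDirDeriv (fun w : Y => ‖w‖) y z ≤ ‖z‖ := by
  have hpos : ∀ᶠ q : Y × ℝ in (𝓝 y) ×ˢ (𝓝[>] (0:ℝ)), 0 < q.2 :=
    Filter.Eventually.prod_inr self_mem_nhdsWithin _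
  haveI : ((𝓝 y) ×ˢ (𝓝[>] (0:ℝ))).NeBot := Filter.prod_neBot.2 ⟨inferInstance, inferInstance⟩
  unfold clarkeDirDeriv
  refine real_limsup_le (d := -‖z‖) ?_ ?_
  · filter_upwards [hpos] with q hq
    have h1 : ‖q.1‖ - q.2 * ‖z‖ ≤ ‖q.1 + q.2 • z‖ := by
      have h2 := norm_sub_norm_le q.1 (q.1 + q.2 • z)
      have h3 : q.1 - (q.1 + q.2 • z) = -(q.2 • z) := by abel
      rw [h3, norm_neg, norm_smul, Real.norm_eq_abs, abs_of_pos hq] at h2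
      linarith
    rw [le_div_iff₀ hq]
    nlinarith
  · filter_upwards [hpos] with q hq
    have h1 : ‖q.1 + q.2 • z‖ ≤ ‖q.1‖ + q.2 * ‖z‖ := by
      have h2 := norm_add_le q.1 (q.2 • z)
      rw [norm_smul, Real.norm_eq_abs, abs_of_pos hq] at h2
      linarith
    rw [div_le_iff₀ hq]
    nlinarith

lemma clarkeDirDeriv_norm_neg {w₀ : Y} (hw : w₀ ≠ 0) :
    clarkeDirDeriv (fun w : Y => ‖w‖) w₀ (-w₀) ≤ -‖w₀‖ := by
  haveI : ((𝓝 w₀) ×ˢ (𝓝[>] (0:ℝ))).NeBot := Filter.prod_neBot.2 ⟨inferInstance, inferInstance⟩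
  refine le_of_forall_pos_le_add ?_
  intro ε hε
  have hball : ∀ᶠ q : Y × ℝ in (𝓝 w₀) ×ˢ (𝓝[>] (0:ℝ)), q.1 ∈ Metric.ball w₀ (ε/2) :=
    Filter.Eventually.prod_inl
      (Metric.isOpen_ball.eventually_mem (Metric.mem_ball_self (by positivity))) _
  have hIoo : ∀ᶠ q : Y × ℝ in (𝓝 w₀) ×ˢ (𝓝[>] (0:ℝ)), q.2 ∈ Set.Ioo (0:ℝ) 1 :=
    Filter.Eventually.prod_inr
      (Ioo_mem_nhdsGT_of_mem (Set.mem_Ico.2 ⟨le_refl _, one_pos⟩)) _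
  unfold clarkeDirDeriv
  refine real_limsup_le (d := -‖(-w₀ : Y)‖) ?_ ?_
  · filter_upwards [hIoo] with q hq
    obtain ⟨hq2, -⟩ := hq
    have h1 : ‖q.1‖ - q.2 * ‖(-w₀ : Y)‖ ≤ ‖q.1 + q.2 • (-w₀)‖ := by
      have h2 := norm_sub_norm_le q.1 (q.1 + q.2 • (-w₀ : Y))
      have h3 : q.1 - (q.1 + q.2 • (-w₀ : Y)) = -(q.2 • (-w₀ : Y)) := by abel
      rw [h3, norm_neg, norm_smul, Real.norm_eq_abs, abs_of_pos hq2] at h2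
      linarith
    rw [le_div_iff₀ hq2]
    nlinarith
  · filter_upwards [hball, hIoo] with q h1 h2
    obtain ⟨h2a, h2b⟩ := h2
    have hid : q.1 + q.2 • (-w₀) = (1 - q.2) • q.1 + q.2 • (q.1 - w₀) := by module
    have hnorm1 : ‖q.1 + q.2 • (-w₀)‖ ≤ (1 - q.2) * ‖q.1‖ + q.2 * ‖q.1 - w₀‖ := by
      rw [hid]
      refine le_trans (norm_add_le _ _) ?_
      rw [norm_smul, norm_smul, Real.norm_eq_abs, Real.norm_eq_abs, abs_of_pos h2a,
        abs_of_nonneg (by linarith : (0:ℝ) ≤ 1 - q.2)]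
    have hq1' : ‖q.1 - w₀‖ < ε/2 := by rwa [mem_ball_iff_norm] at h1
    have hlow : ‖w₀‖ - ε/2 ≤ ‖q.1‖ := by
      have h3 := norm_sub_norm_le w₀ q.1
      rw [norm_sub_rev q.1 w₀] at hq1'
      linarith
    rw [div_le_iff₀ h2a]
    have e1 : ‖q.1 - w₀‖ - ‖q.1‖ ≤ -‖w₀‖ + ε := by linarith
    have e2 := mul_le_mul_of_nonneg_left e1 h2a.le
    nlinarith

lemma clarke_subdiff_facts {w₀ : Y} (hw : w₀ ≠ 0)
    {p : Y →L[ℝ] ℝ} (hp : p ∈ clarkeSubdiff (fun w : Y => ‖w‖) w₀) :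
    (∀ z, p z ≤ ‖z‖) ∧ ‖w₀‖ ≤ p w₀ := by
  constructor
  · intro z
    exact le_trans (hp z) (clarkeDirDeriv_norm_le w₀ z)
  · have h1 := le_trans (hp (-w₀)) (clarkeDirDeriv_norm_neg hw)
    rw [map_neg] at h1
    linarith

lemma opnorm_comp_lb {X : Type*} [NormedAddCommGroup X] [NormedSpace ℝ X]
    {α : ℝ} (hαpos : 0 < α) {T : X →L[ℝ] Y} (e : X ≃L[ℝ] Y) (he : (e : X →L[ℝ] Y) = T)
    (hco : ∀ x, α * ‖x‖ ≤ ‖T x‖) {p : Y →L[ℝ] ℝ} (hple : ∀ z, p z ≤ ‖z‖)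
    {w₀ : Y} (hw : w₀ ≠ 0) (hpw : ‖w₀‖ ≤ p w₀) : α ≤ ‖p.comp T‖ := by
  have hw₀n : 0 < ‖w₀‖ := norm_pos_iff.2 hw
  have hy₁ : ‖(‖w₀‖⁻¹ • w₀ : Y)‖ = 1 := by
    rw [norm_smul, norm_inv, norm_norm, inv_mul_cancel₀ hw₀n.ne']
  have hpy₁ : 1 ≤ p (‖w₀‖⁻¹ • w₀) := by
    rw [map_smul, smul_eq_mul, ← inv_mul_cancel₀ hw₀n.ne']
    exact mul_le_mul_of_nonneg_left hpw (inv_pos.2 hw₀n).le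
  have hTx₁ : T (e.symm (‖w₀‖⁻¹ • w₀)) = ‖w₀‖⁻¹ • w₀ := by
    rw [← he]
    exact e.apply_symm_apply _
  have hx₁ : α * ‖e.symm (‖w₀‖⁻¹ • w₀)‖ ≤ 1 := by
    have h1 := hco (e.symm (‖w₀‖⁻¹ • w₀))
    rwa [hTx₁, hy₁] at h1
  have h1 : 1 ≤ ‖p.comp T‖ * ‖e.symm (‖w₀‖⁻¹ • w₀)‖ := by
    calc 1 ≤ p (‖w₀‖⁻¹ • w₀) := hpy₁
    _ = (p.comp T) (e.symm (‖w₀‖⁻¹ • w₀)) := by rw [ContinuousLinearMap.comp_apply, hTx₁]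
    _ ≤ ‖(p.comp T) (e.symm (‖w₀‖⁻¹ • w₀))‖ := le_abs_self _
    _ ≤ ‖p.comp T‖ * ‖e.symm (‖w₀‖⁻¹ • w₀)‖ := (p.comp T).le_opNorm _
  by_contra hlt
  push_neg at hlt
  have hx₁pos : 0 < ‖e.symm (‖w₀‖⁻¹ • w₀)‖ := by
    by_contra hc
    push_neg at hc
    have hz : ‖e.symm (‖w₀‖⁻¹ • w₀)‖ = 0 := le_antisymm hc (norm_nonneg _)
    rw [hz, mul_zero] at h1
    linarith
  have h2 := mul_lt_mul_of_pos_right hlt hx₁pos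
  linarith

end AuxClarke

section AuxEkeland

/-- A version of Ekeland's variational principle for nonnegative continuous functions
on a closed subset of a Banach space. -/
lemma ekeland_principle {X : Type*} [NormedAddCommGroup X] [NormedSpace ℝ X]
    [CompleteSpace X] {s : Set X} (hs : IsClosed s) {g : X → ℝ} (hg : ContinuousOn g s)
    (hg0 : ∀ z ∈ s, 0 ≤ g z) {x₀ : X} (hx₀ : x₀ ∈ s) {δ : ℝ} (hδ : 0 < δ) :
    ∃ x ∈ s, g x + δ * ‖x - x₀‖ ≤ g x₀ ∧ ∀ z ∈ s, g x ≤ g z + δ * ‖z - x‖ := by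
  classical
  set 𝒮 : X → Set X := fun a => {z | z ∈ s ∧ g z + δ * ‖z - a‖ ≤ g a} with h𝒮
  have hself : ∀ a ∈ s, a ∈ 𝒮 a := fun a ha => ⟨ha, by simp⟩
  have hsubs : ∀ a, 𝒮 a ⊆ s := fun a z hz => hz.1
  have htrans : ∀ a b z, b ∈ 𝒮 a → z ∈ 𝒮 b → z ∈ 𝒮 a := by
    rintro a b z ⟨hbs, hba⟩ ⟨hzs, hzb⟩
    refine ⟨hzs, ?_⟩
    have h3 : ‖z - a‖ ≤ ‖z - b‖ + ‖b - a‖ := by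
      have h4 : z - a = (z - b) + (b - a) := by abel
      rw [h4]
      exact norm_add_le _ _
    nlinarith
  have hne : ∀ a ∈ s, (g '' 𝒮 a).Nonempty := fun a ha => ⟨g a, a, hself a ha, rfl⟩
  have hbdd : ∀ a, BddBelow (g '' 𝒮 a) :=
    fun a => ⟨0, by rintro c ⟨z, hz, rfl⟩; exact hg0 z (hsubs a hz)⟩
  have hstep : ∀ (a : X), a ∈ s → ∀ n : ℕ, ∃ b, b ∈ 𝒮 a ∧ g b ≤ sInf (g '' 𝒮 a) + (1/2)^n := by
    intro a ha n
    obtain ⟨gb, hgb, hlt⟩ := Real.lt_sInf_add_pos (hne a ha) (show (0:ℝ) < (1/2)^n by positivity)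
    obtain ⟨b, hb, rfl⟩ := hgb
    exact ⟨b, hb, hlt.le⟩
  let step : ℕ → {a : X // a ∈ s} → {a : X // a ∈ s} := fun n a =>
    ⟨(hstep a.1 a.2 n).choose, hsubs _ (hstep a.1 a.2 n).choose_spec.1⟩
  let seq : ℕ → {a : X // a ∈ s} := fun n => Nat.rec ⟨x₀, hx₀⟩ step n
  let x : ℕ → X := fun n => (seq n).1
  have hxmem : ∀ n, x n ∈ s := fun n => (seq n).2
  have hkey : ∀ n, x (n+1) ∈ 𝒮 (x n) ∧ g (x (n+1)) ≤ sInf (g '' 𝒮 (x n)) + (1/2)^n :=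
    fun n => (hstep (x n) (hxmem n) n).choose_spec
  have hchain : ∀ n m, n ≤ m → x m ∈ 𝒮 (x n) := by
    intro n m hnm
    induction m, hnm using Nat.le_induction with
    | base => exact hself _ (hxmem n)
    | succ m hnm ih => exact htrans _ _ _ ih (hkey m).1
  have hganti : ∀ n m, n ≤ m → g (x m) ≤ g (x n) := by
    intro n m hnm
    have h1 := (hchain n m hnm).2
    nlinarith [norm_nonneg (x m - x n)]
  have hbddb : BddBelow (Set.range fun n => g (x n)) :=
    ⟨0, by rintro c ⟨n, rfl⟩; exact hg0 _ (hxmem n)⟩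
  have hgconv : Filter.Tendsto (fun n => g (x n)) Filter.atTop (𝓝 (⨅ n, g (x n))) :=
    tendsto_atTop_ciInf (fun n m hnm => hganti n m hnm) hbddb
  have hL : ∀ n, (⨅ n, g (x n)) ≤ g (x n) := fun n => ciInf_le hbddb n
  have hcauchy : CauchySeq x := by
    rw [Metric.cauchySeq_iff']
    intro ε hε
    have hev : ∀ᶠ n in Filter.atTop, g (x n) < (⨅ n, g (x n)) + δ * ε :=
      hgconv (Iio_mem_nhds (by nlinarith))
    rw [Filter.eventually_atTop] at hev
    obtain ⟨N, hN⟩ := hev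
    refine ⟨N, fun n hn => ?_⟩
    have hSn := (hchain N n hn).2
    rw [dist_eq_norm]
    have h9 : δ * ‖x n - x N‖ < δ * ε := by
      have := hN N le_rfl
      have := hL n
      linarith
    exact (mul_lt_mul_iff_right₀ hδ).1 h9
  obtain ⟨xh, hxh⟩ := cauchySeq_tendsto_of_complete hcauchy
  have hxhs : xh ∈ s := hs.mem_of_tendsto hxh (Filter.Eventually.of_forall hxmem)
  have hgxh : Filter.Tendsto (fun n => g (x n)) Filter.atTop (𝓝 (g xh)) := by
    have hxin : Filter.Tendsto x Filter.atTop (𝓝[s] xh) :=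
      tendsto_nhdsWithin_iff.2 ⟨hxh, Filter.Eventually.of_forall hxmem⟩
    exact ((hg xh hxhs).tendsto).comp hxin
  have hxhS : ∀ n, xh ∈ 𝒮 (x n) := by
    intro n
    refine ⟨hxhs, ?_⟩
    have htend : Filter.Tendsto (fun m => g (x m) + δ * ‖x m - x n‖) Filter.atTop
        (𝓝 (g xh + δ * ‖xh - x n‖)) :=
      hgxh.add (((hxh.sub_const (x n)).norm).const_mul δ)
    refine le_of_tendsto htend ?_
    filter_upwards [Filter.eventually_ge_atTop n] with m hm
    exact (hchain n m hm).2
  refine ⟨xh, hxhs, ?_, ?_⟩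
  · exact (hxhS 0).2
  · intro z hz
    by_contra hcon
    push_neg at hcon
    have hz𝒮 : ∀ n, z ∈ 𝒮 (x n) := fun n => htrans _ _ _ (hxhS n) ⟨hz, by linarith⟩
    have hInf : ∀ n, sInf (g '' 𝒮 (x n)) ≤ g z := fun n => csInf_le (hbdd _) ⟨z, hz𝒮 n, rfl⟩
    have hgle : ∀ n, g (x (n+1)) ≤ g z + (1/2)^n :=
      fun n => le_trans (hkey n).2 (by linarith [hInf n])
    have htends : Filter.Tendsto (fun n : ℕ => g z + (1/2:ℝ)^n) Filter.atTop (𝓝 (g z + 0)) :=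
      tendsto_const_nhds.add (tendsto_pow_atTop_nhds_zero_of_lt_one (by norm_num) (by norm_num))
    have hshift : Filter.Tendsto (fun n => g (x (n+1))) Filter.atTop (𝓝 (g xh)) :=
      hgxh.comp (Filter.tendsto_add_atTop_nat 1)
    have hfin : g xh ≤ g z + 0 := le_of_tendsto_of_tendsto' hshift htends hgle
    nlinarith [norm_nonneg (z - xh)]

end AuxEkeland

section AuxWeakDual

/-- Every continuous linear functional on the weak-star dual is given by evaluation
at a point of the predual. -/
lemma weakdual_eval {X : Type*} [NormedAddCommGroup X] [NormedSpace ℝ X]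
    (φ : WeakDual ℝ X →L[ℝ] ℝ) :
    ∃ v : X, ∀ S : X →L[ℝ] ℝ, φ (StrongDual.toWeakDual S) = S v := by
  classical
  have hcont : Filter.Tendsto φ (𝓝 (0 : WeakDual ℝ X)) (𝓝 (0:ℝ)) := by
    have h1 := φ.continuous.tendsto (0 : WeakDual ℝ X)
    rwa [map_zero] at h1
  have hpre : φ ⁻¹' Metric.ball (0:ℝ) 1 ∈ 𝓝 (0 : WeakDual ℝ X) :=
    hcont (Metric.ball_mem_nhds _ one_pos)
  have hpre' : φ ⁻¹' Metric.ball (0:ℝ) 1 ∈ 𝓝 (0 : WeakBilin (topDualPairing ℝ X)) := hpre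
  obtain ⟨V, hV, hVsub⟩ := (LinearMap.hasBasis_weakBilin (topDualPairing ℝ X)).mem_iff.1 hpre'
  obtain ⟨sfin, rr, hrr, rfl⟩ :=
    (SeminormFamily.basisSets_iff ((topDualPairing ℝ X).toSeminormFamily)).1 hV
  have hker : ∀ S : X →L[ℝ] ℝ, (∀ yv ∈ sfin, S yv = 0) →
      φ (StrongDual.toWeakDual S) = 0 := by
    intro S hS0
    by_contra hne0
    have hmem : ∀ c : ℝ, (c • S) ∈
        (sfin.sup ((topDualPairing ℝ X).toSeminormFamily)).ball 0 rr := by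
      intro c
      rw [Seminorm.mem_ball_zero]
      refine Seminorm.finset_sup_apply_lt hrr ?_
      intro yv hyv
      rw [LinearMap.toSeminormFamily_apply]
      show ‖(c • S) yv‖ < rr
      rw [ContinuousLinearMap.smul_apply, hS0 yv hyv, smul_zero, norm_zero]
      exact hrr
    have hval : ∀ c : ℝ, |c * φ (StrongDual.toWeakDual S)| < 1 := by
      intro c
      have h1 : StrongDual.toWeakDual (c • S) ∈ φ ⁻¹' Metric.ball (0:ℝ) 1 := hVsub (hmem c)
      simp only [Set.mem_preimage, Metric.mem_ball, dist_zero_right] at h1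
      have h2 : (StrongDual.toWeakDual (c • S) : WeakDual ℝ X)
          = c • StrongDual.toWeakDual S := map_smul _ c S
      rw [h2, map_smul, smul_eq_mul] at h1
      simpa [Real.norm_eq_abs, abs_mul] using h1
    have h3 := hval (2 / φ (StrongDual.toWeakDual S))
    rw [div_mul_cancel₀ 2 hne0] at h3
    norm_num at h3
  have hKer : ⨅ i : {yv // yv ∈ sfin}, LinearMap.ker
        (((ContinuousLinearMap.apply ℝ ℝ (i.1 : X)) : (X →L[ℝ] ℝ) →L[ℝ] ℝ) :
          (X →L[ℝ] ℝ) →ₗ[ℝ] ℝ) ≤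
      LinearMap.ker ((φ.comp NormedSpace.Dual.continuousLinearMapToWeakDual :
          (X →L[ℝ] ℝ) →L[ℝ] ℝ) : (X →L[ℝ] ℝ) →ₗ[ℝ] ℝ) := by
    intro S hS
    rw [LinearMap.mem_ker]
    have h4 : φ (StrongDual.toWeakDual S) = 0 := by
      refine hker S ?_
      intro yv hyv
      have h5 := (Submodule.mem_iInf _).1 hS ⟨yv, hyv⟩
      simpa using h5
    exact h4
  have hspan := mem_span_of_iInf_ker_le_ker (𝕜 := ℝ) hKer
  obtain ⟨cc, hcc⟩ := (Submodule.mem_span_range_iff_exists_fun ℝ).1 hspan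
  refine ⟨∑ i : {yv // yv ∈ sfin}, cc i • (i.1 : X), fun S => ?_⟩
  have h1 := LinearMap.congr_fun hcc S
  simp only [LinearMap.coe_sum, Finset.sum_apply, LinearMap.smul_apply,
    LinearMap.coe_coe, ContinuousLinearMap.coe_coe, ContinuousLinearMap.apply_apply,
    ContinuousLinearMap.comp_apply, smul_eq_mul] at h1
  have h2 : S (∑ i : {yv // yv ∈ sfin}, cc i • (i.1 : X))
      = ∑ i : {yv // yv ∈ sfin}, cc i * S i.1 := by
    rw [map_sum]
    refine Finset.sum_congr rfl fun i _ => ?_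
    rw [map_smul, smul_eq_mul]
  rw [h2]
  exact h1.symm

/-- The key separation argument: a nonempty weak-star closed convex set of functionals
of norm at least `α` cannot have all its "sup-evaluations" bounded below by `-(α/2)‖v‖`. -/
lemma no_escape {X : Type*} [NormedAddCommGroup X] [NormedSpace ℝ X]
    {A : Set (X →L[ℝ] ℝ)} {α : ℝ} (hαpos : 0 < α)
    (hclosed : IsClosed ((StrongDual.toWeakDual : (X →L[ℝ] ℝ) → WeakDual ℝ X) '' A))
    (hconv : Convex ℝ A) (hne : A.Nonempty)
    (hnorm : ∀ S ∈ A, α ≤ ‖S‖)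
    (hsup : ∀ v : X, -(α/2) * ‖v‖ ≤ sSup ((fun S : X →L[ℝ] ℝ => S v) '' A)) : False := by
  classical
  haveI : LocallyConvexSpace ℝ (WeakDual ℝ X) := WeakBilin.locallyConvexSpace
  have hKcomp : IsCompact (WeakDual.toStrongDual ⁻¹'
      Metric.closedBall (0 : StrongDual ℝ X) (3*α/4)) :=
    WeakDual.isCompact_closedBall (𝕜 := ℝ) 0 (3*α/4)
  have hKconv : Convex ℝ (WeakDual.toStrongDual ⁻¹'
      Metric.closedBall (0 : StrongDual ℝ X) (3*α/4)) := by
    intro a ha b hb ta tb hta htb htab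
    simp only [Set.mem_preimage] at *
    have h1 := (convex_closedBall (0 : StrongDual ℝ X) (3*α/4)) ha hb hta htb htab
    simpa [map_add, map_smul] using h1
  have hAwconv : Convex ℝ ((StrongDual.toWeakDual : _ → WeakDual ℝ X) '' A) := by
    rintro _ ⟨Sa, hSa, rfl⟩ _ ⟨Sb, hSb, rfl⟩ ta tb hta htb htab
    exact ⟨ta • Sa + tb • Sb, hconv hSa hSb hta htb htab, by simp [map_add, map_smul]⟩
  have hdisj : Disjoint (WeakDual.toStrongDual ⁻¹'
      Metric.closedBall (0 : StrongDual ℝ X) (3*α/4))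
      ((StrongDual.toWeakDual : _ → WeakDual ℝ X) '' A) := by
    rw [Set.disjoint_left]
    rintro a haK ⟨S, hS, rfl⟩
    have h1 : ‖S‖ ≤ 3*α/4 := by
      have h2 : WeakDual.toStrongDual (StrongDual.toWeakDual S) ∈
          Metric.closedBall (0 : StrongDual ℝ X) (3*α/4) := haK
      rwa [mem_closedBall_zero_iff] at h2
    have h3 := hnorm S hS
    linarith
  obtain ⟨φ, u, c, hKφ, huc, hAφ⟩ :=
    geometric_hahn_banach_compact_closed hKconv hKcomp hAwconv hclosed hdisj
  obtain ⟨v₀, hv₀⟩ := weakdual_eval φ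
  have hball : ∀ S : X →L[ℝ] ℝ, ‖S‖ ≤ 3*α/4 → S v₀ < u := by
    intro S hS
    have hmem : StrongDual.toWeakDual S ∈ WeakDual.toStrongDual ⁻¹'
        Metric.closedBall (0 : StrongDual ℝ X) (3*α/4) := by
      simp only [Set.mem_preimage]
      rwa [mem_closedBall_zero_iff]
    have h1 := hKφ _ hmem
    rwa [hv₀ S] at h1
  have h4 : ∀ S ∈ A, c < S v₀ := by
    intro S hS
    have h5 := hAφ _ ⟨S, hS, rfl⟩
    rwa [hv₀ S] at h5
  have hv₀ne : v₀ ≠ 0 := by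
    intro h0
    obtain ⟨Sb, hSb⟩ := hne
    have h1 := h4 Sb hSb
    rw [h0, map_zero] at h1
    have h2 := hball 0 (by rw [norm_zero]; positivity)
    rw [ContinuousLinearMap.zero_apply] at h2
    linarith
  obtain ⟨gd, hgd1, hgd2⟩ := exists_dual_vector ℝ v₀ (norm_ne_zero_iff.2 hv₀ne)
  have hgd2' : gd v₀ = ‖v₀‖ := by exact_mod_cast hgd2
  have hv₀pos : 0 < ‖v₀‖ := norm_pos_iff.2 hv₀ne
  have hS₁ : ((3*α/4) • gd) v₀ < u := by
    refine hball _ ?_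
    rw [clm_norm_smul, hgd1, mul_one, abs_of_pos (by positivity)]
  have h3 : (3*α/4) * ‖v₀‖ < u := by
    rwa [ContinuousLinearMap.smul_apply, smul_eq_mul, hgd2'] at hS₁
  have h5 : sSup ((fun S : X →L[ℝ] ℝ => S (-v₀)) '' A) ≤ -c := by
    refine csSup_le (hne.image _) ?_
    rintro b ⟨S, hS, rfl⟩
    have h6 := h4 S hS
    show S (-v₀) ≤ -c
    rw [map_neg]
    linarith
  have h6 := hsup (-v₀)
  rw [norm_neg] at h6
  nlinarith

end AuxWeakDual

/-- Global inversion on a convex open set: if `Jf` satisfies the chain rule condition,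
every operator in `co Jf(U)` is an isomorphism and `α > 0` is a lower bound for their
co-norms, then `f(U)` is open, `f` is a homeomorphism from `U` onto `f(U)` (it is
continuous, injective and open), and its inverse is `(1/α)`-Lipschitz. -/
theorem global_inversion_convex
    {X Y : Type*} [NormedAddCommGroup X] [NormedSpace ℝ X] [CompleteSpace X]
    [NormedAddCommGroup Y] [NormedSpace ℝ Y] [CompleteSpace Y]
    {U : Set X} (hUopen : IsOpen U) (hUconv : Convex ℝ U)
    {f : X → Y} (hf : ContinuousOn f U)
    {Jf : X → Set (X →L[ℝ] Y)} (hJf : ∀ x ∈ U, IsPseudoJacobianAt f (Jf x) x)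
    (hcrc : ChainRuleCond f Jf U)
    (hiso : ∀ T ∈ convexHull ℝ (⋃ x ∈ U, Jf x), IsBanachIso T)
    {α : ℝ} (hαpos : 0 < α)
    (hα : ∀ T ∈ convexHull ℝ (⋃ x ∈ U, Jf x), α ≤ conorm T) :
    IsOpen (f '' U) ∧
      (∀ W : Set X, W ⊆ U → IsOpen W → IsOpen (f '' W)) ∧
      Set.InjOn f U ∧
      ∀ u ∈ U, ∀ v ∈ U, ‖u - v‖ ≤ (1 / α) * ‖f u - f v‖ := by
  classical
  -- points on segments stay in `U`
  have hseg : ∀ u ∈ U, ∀ v ∈ U, ∀ s ∈ Set.Icc (0:ℝ) 1, v + s • (u - v) ∈ U := by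
    intro u hu v hv s hs
    have h1 := hUconv hv hu (by linarith [hs.2] : (0:ℝ) ≤ 1 - s) hs.1 (by ring)
    have h2 : (1 - s) • v + s • u = v + s • (u - v) := by module
    rwa [h2] at h1
  -- Part 4 key estimate
  have hkey : ∀ u ∈ U, ∀ v ∈ U, α * ‖u - v‖ ≤ ‖f u - f v‖ := by
    intro u hu v hv
    rcases eq_or_ne u v with rfl | huv
    · simp
    have hwne : u - v ≠ 0 := sub_ne_zero.2 huv
    have hwpos : 0 < ‖u - v‖ := norm_pos_iff.2 hwne
    set w : X := u - v with hw
    let evw : (X →L[ℝ] Y) →ₗ[ℝ] Y :=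
      { toFun := fun T => T w
        map_add' := by intros; simp
        map_smul' := by intros; simp }
    have hKconv : Convex ℝ (evw '' convexHull ℝ (⋃ x ∈ U, Jf x)) :=
      (convex_convexHull ℝ _).linear_image evw
    have hKlb : ∀ k ∈ evw '' convexHull ℝ (⋃ x ∈ U, Jf x), α * ‖w‖ ≤ ‖k‖ := by
      rintro k ⟨T, hT, rfl⟩
      exact conorm_bound (hα T hT) w
    obtain ⟨T₀, hT₀⟩ := (hJf u hu).1
    have hKne : (evw '' convexHull ℝ (⋃ x ∈ U, Jf x)).Nonempty :=
      ⟨evw T₀, T₀, subset_convexHull ℝ _ (Set.mem_iUnion₂.2 ⟨u, hu, hT₀⟩), rfl⟩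
    have hmain : ∀ γ : ℝ, 0 < γ → γ < α * ‖w‖ → γ ≤ ‖f u - f v‖ := by
      intro γ hγ0 hγlt
      obtain ⟨p₀, hp₀n, hp₀K⟩ :=
        separation_from_origin hKconv hKne (by positivity) hKlb hγ0.le hγlt
      have hcont : ContinuousOn (fun s : ℝ => -(p₀ (f (v + s • w)))) (Set.Icc 0 1) := by
        have hline : Continuous fun s : ℝ => v + s • w := by continuity
        have hmaps : Set.MapsTo (fun s : ℝ => v + s • w) (Set.Icc 0 1) U :=
          fun s hs => hseg u hu v hv s hs
        exact (p₀.continuous.comp_continuousOn (hf.comp hline.continuousOn hmaps)).neg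
      have hd : ∀ s ∈ Set.Ico (0:ℝ) 1, Filter.limsup
          (fun t : ℝ => ((fun s' : ℝ => -(p₀ (f (v + s' • w)))) (s + t)
            - (fun s' : ℝ => -(p₀ (f (v + s' • w)))) s) / t) (𝓝[>] (0:ℝ)) ≤ -γ := by
        intro s hs
        have hsU : v + s • w ∈ U := hseg u hu v hv s ⟨hs.1, hs.2.le⟩
        have h1 := (hJf _ hsU).2 (-p₀) w
        unfold diniUpper at h1
        have hpt : ∀ t : ℝ, v + (s + t) • w = (v + s • w) + t • w := by
          intro t
          rw [add_smul, add_assoc]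
        have heq : (fun t : ℝ => ((fun s' : ℝ => -(p₀ (f (v + s' • w)))) (s + t)
              - (fun s' : ℝ => -(p₀ (f (v + s' • w)))) s) / t)
            = fun t : ℝ => ((-p₀) (f ((v + s • w) + t • w)) - (-p₀) (f (v + s • w))) / t := by
          funext t
          simp only [ContinuousLinearMap.neg_apply, hpt]
        rw [heq]
        refine le_trans h1 ?_
        refine csSup_le ((hJf _ hsU).1.image _) ?_
        rintro b ⟨T, hT, rfl⟩
        have hTw : evw T ∈ evw '' convexHull ℝ (⋃ x ∈ U, Jf x) :=
          ⟨T, subset_convexHull ℝ _ (Set.mem_iUnion₂.2 ⟨_, hsU, hT⟩), rfl⟩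
        have h2 := hp₀K _ hTw
        have h3 : evw T = T w := rfl
        rw [h3] at h2
        simp only [ContinuousLinearMap.neg_apply]
        linarith
      have hmvt := mvt_diniUpper (by linarith : -γ < 0) hcont hd
      have hmvt' : -(p₀ (f (v + (1:ℝ) • w))) ≤ -(p₀ (f (v + (0:ℝ) • w))) + -γ := hmvt
      have he1 : v + (1:ℝ) • w = u := by rw [one_smul, hw]; abel
      have he0 : v + (0:ℝ) • w = v := by rw [zero_smul, add_zero]
      rw [he1, he0] at hmvt'
      have hfin : γ ≤ p₀ (f u) - p₀ (f v) := by linarith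
      have hsub : p₀ (f u) - p₀ (f v) = p₀ (f u - f v) := (map_sub p₀ (f u) (f v)).symm
      rw [hsub] at hfin
      calc γ ≤ p₀ (f u - f v) := hfin
      _ ≤ |p₀ (f u - f v)| := le_abs_self _
      _ ≤ ‖p₀‖ * ‖f u - f v‖ := p₀.le_opNorm _
      _ ≤ 1 * ‖f u - f v‖ := by nlinarith [norm_nonneg (f u - f v)]
      _ = ‖f u - f v‖ := one_mul _
    by_contra hcon
    push_neg at hcon
    have h1 : 0 < (‖f u - f v‖ + α * ‖w‖) / 2 := by
      have := norm_nonneg (f u - f v)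
      have : 0 < α * ‖w‖ := by positivity
      linarith [norm_nonneg (f u - f v)]
    have h2 : (‖f u - f v‖ + α * ‖w‖) / 2 < α * ‖w‖ := by linarith
    have h3 := hmain _ h1 h2
    linarith
  -- Part 2: openness of images of open subsets
  have hopen : ∀ W : Set X, W ⊆ U → IsOpen W → IsOpen (f '' W) := by
    intro W hWU hWopen
    rw [Metric.isOpen_iff]
    rintro yy ⟨x₀, hx₀W, rfl⟩
    obtain ⟨r', hr'pos, hball'⟩ := Metric.isOpen_iff.1 hWopen x₀ hx₀W
    have hrpos : 0 < r'/2 := by positivity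
    have hbW : Metric.closedBall x₀ (r'/2) ⊆ W :=
      (Metric.closedBall_subset_ball (by linarith)).trans hball'
    have hbU : Metric.closedBall x₀ (r'/2) ⊆ U := hbW.trans hWU
    refine ⟨α * (r'/2) / 2, by positivity, ?_⟩
    intro y hy
    rw [Metric.mem_ball] at hy
    have hgc : ContinuousOn (fun z => ‖f z - y‖) (Metric.closedBall x₀ (r'/2)) :=
      ((hf.mono hbU).sub continuousOn_const).norm
    have hg0 : ∀ z ∈ Metric.closedBall x₀ (r'/2), 0 ≤ ‖f z - y‖ := fun z _ => norm_nonneg _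
    obtain ⟨xh, hxhmem, hxh1, hxh2⟩ := ekeland_principle Metric.isClosed_closedBall hgc hg0
      (Metric.mem_closedBall_self hrpos.le) (show 0 < α/2 by positivity)
    have hgx₀ : ‖f x₀ - y‖ < α * (r'/2) / 2 := by
      rw [← dist_eq_norm, dist_comm]
      exact hy
    have hnear : ‖xh - x₀‖ < r'/2 := by
      have h0 : 0 ≤ ‖f xh - y‖ := norm_nonneg _
      have h9 : (α/2) * ‖xh - x₀‖ < (α/2) * (r'/2) := by linarith [hxh1]
      exact (mul_lt_mul_iff_right₀ (by positivity)).1 h9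
    rcases eq_or_ne (f xh) y with heq | hne
    · exact ⟨xh, hbW hxhmem, heq⟩
    exfalso
    have hxhU : xh ∈ U := hbU hxhmem
    have hyne : y ≠ f xh := Ne.symm hne
    obtain ⟨hAclosed, hAconv, hApj⟩ := hcrc xh hxhU y hyne
    have hdini : ∀ vv : X, -(α/2) * ‖vv‖ ≤ diniUpper (fun z => ‖f z - y‖) xh vv := by
      intro vv
      have hc : -(α/2) * ‖vv‖ ≤ 0 := by
        have : 0 ≤ (α/2) * ‖vv‖ := by positivity
        linarith
      unfold diniUpper
      refine le_real_limsup hc ?_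
      have ht₁pos : 0 < (r'/2 - ‖xh - x₀‖)/(‖vv‖ + 1) := by
        apply div_pos
        · linarith [hnear]
        · positivity
      filter_upwards [Ioo_mem_nhdsGT_of_mem
        (Set.mem_Ico.2 ⟨le_refl (0:ℝ), ht₁pos⟩)] with t ht
      obtain ⟨ht0, htlt⟩ := ht
      have hzmem : xh + t • vv ∈ Metric.closedBall x₀ (r'/2) := by
        rw [Metric.mem_closedBall, dist_eq_norm]
        have hab : xh + t • vv - x₀ = (xh - x₀) + t • vv := by abel
        rw [hab]
        refine le_trans (norm_add_le _ _) ?_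
        rw [norm_smul, Real.norm_eq_abs, abs_of_pos ht0]
        have h1 : t * ‖vv‖ ≤ t * (‖vv‖ + 1) := by nlinarith
        have h2 : t * (‖vv‖ + 1) < r'/2 - ‖xh - x₀‖ :=
          (lt_div_iff₀ (by positivity)).1 htlt
        linarith
      have h3 := hxh2 _ hzmem
      have h4 : ‖xh + t • vv - xh‖ = t * ‖vv‖ := by
        rw [show xh + t • vv - xh = t • vv by abel, norm_smul, Real.norm_of_nonneg ht0.le]
      rw [h4] at h3
      rw [le_div_iff₀ ht0]
      nlinarith
    have hsup : ∀ vv : X, -(α/2) * ‖vv‖ ≤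
        sSup ((fun S : X →L[ℝ] ℝ => S vv) '' pjComp f Jf xh y) := by
      intro vv
      have h1 := hApj.2 (ContinuousLinearMap.id ℝ ℝ) vv
      simp only [ContinuousLinearMap.coe_id', id_eq] at h1
      exact le_trans (hdini vv) h1
    have hnorm : ∀ S ∈ pjComp f Jf xh y, α ≤ ‖S‖ := by
      rintro S ⟨p, hp, T, hT, rfl⟩
      have hw₀ : f xh - y ≠ 0 := sub_ne_zero.2 hne
      obtain ⟨hple, hpw⟩ := clarke_subdiff_facts hw₀ hp
      have hTbig : T ∈ convexHull ℝ (⋃ x ∈ U, Jf x) :=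
        convexHull_mono (fun T' hT' => Set.mem_iUnion₂.2 ⟨xh, hxhU, hT'⟩) hT
      obtain ⟨e, he⟩ := hiso T hTbig
      exact opnorm_comp_lb hαpos e he (fun x => conorm_bound (hα T hTbig) x) hple hw₀ hpw
    exact no_escape hαpos hAclosed hAconv hApj.1 hnorm hsup
  refine ⟨hopen U (subset_refl U) hUopen, hopen, ?_, ?_⟩
  · intro a ha b hb hab
    have h1 := hkey a ha b hb
    rw [hab, sub_self, norm_zero] at h1
    have h2 : ‖a - b‖ ≤ 0 := by nlinarith [norm_nonneg (a - b)]
    have h3 : a - b = 0 := norm_le_zero_iff.1 h2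
    exact sub_eq_zero.1 h3
  · intro u hu v hv
    have h1 := hkey u hu v hv
    have h2 : (1/α) * (α * ‖u - v‖) = ‖u - v‖ := by field_simp
    calc ‖u - v‖ = (1/α) * (α * ‖u - v‖) := h2.symm
    _ ≤ (1/α) * ‖f u - f v‖ := mul_le_mul_of_nonneg_left h1 (by positivity)

end
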